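/- Let f = (f_1, …, f_n) : {0,1}^n → {0,1}^n be a Boolean network and suppose f_n = w_1 ∧ ⋯ ∧ w_r, where each w_j : {0,1}^n → {0,1} is a clause, i.e. a disjunction of literals (each literal being a variable x_l or its negation ¬x_l). Define the Boolean network k = (k_1, …, k_{n+r}) : {0,1}^{n+r} → {0,1}^{n+r} in variables (x_1, …, x_n, y_1, …, y_r) by k_i(x,y) = f_i(x) for i = 1, …, n−1, k_n(x,y) = ¬y_1 ∧ ¬y_2 ∧ ⋯ ∧ ¬y_r, and k_{n+j}(x,y) = ¬w_j(x) for j = 1, …, r. Then the map φ(x) = (x, ¬w_1(x), …, ¬w_r(x)) restricts to a bijection from the set {x : f(x) = x} of fixed points of f onto the set {(x,y) : k(x,y) = (x,y)} of fixed points of k. -/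
import Mathlib


/-- A clause: a disjunction of literals, i.e. there are sets `Sp`, `Sn` of indices with
`w x = ⋁_{j∈Sp} x j ∨ ⋁_{j∈Sn} ¬ x j`. -/
def IsClause {m : ℕ} (w : (Fin m → Bool) → Bool) : Prop :=
  ∃ Sp Sn : Finset (Fin m),
    ∀ x, w x = decide ((∃ j ∈ Sp, x j = true) ∨ (∃ j ∈ Sn, x j = false))

/-- The Boolean network `k = (k_1, …, k_{n+r})` in variables `(x, y)` defined by
`k_i(x,y) = f_i(x)` for `i ≠ n` (the last `x`-coordinate),
`k_n(x,y) = ¬y_1 ∧ ⋯ ∧ ¬y_r`, and `k_{n+j}(x,y) = ¬ w_j(x)`. -/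
def kNet {n r : ℕ} (f : (Fin (n + 1) → Bool) → Fin (n + 1) → Bool)
    (w : Fin r → (Fin (n + 1) → Bool) → Bool) :
    (Fin (n + 1) → Bool) × (Fin r → Bool) → (Fin (n + 1) → Bool) × (Fin r → Bool) :=
  fun p =>
    (fun i => if i = Fin.last n then decide (∀ j, p.2 j = false) else f p.1 i,
     fun j => !(w j p.1))

/-- If the last coordinate function of a Boolean network `f` is a conjunction
`f_n = w_1 ∧ ⋯ ∧ w_r` of clauses, then `φ(x) = (x, ¬w_1(x), …, ¬w_r(x))` restricts to a
bijection from the fixed points of `f` onto the fixed points of the network `k`. -/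
theorem fixedPoints_bijOn_kNet {n r : ℕ}
    (f : (Fin (n + 1) → Bool) → Fin (n + 1) → Bool)
    (w : Fin r → (Fin (n + 1) → Bool) → Bool)
    (hw : ∀ j, IsClause (w j))
    (hfn : ∀ x, f x (Fin.last n) = decide (∀ j, w j x = true)) :
    Set.BijOn (fun x => (x, fun j => !(w j x)))
      {x : Fin (n + 1) → Bool | f x = x}
      {p : (Fin (n + 1) → Bool) × (Fin r → Bool) | kNet f w p = p} := by
  constructor
  · intro x hx
    simp only [Set.mem_setOf_eq] at hx ⊢
    unfold kNet
    refine Prod.ext ?_ rfl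
    funext i
    by_cases hi : i = Fin.last n
    · subst hi
      simp only [if_pos rfl]
      rw [← congrFun hx (Fin.last n), hfn]
      simp
    · simp only [if_neg hi]
      exact congrFun hx i
  constructor
  · intro a _ b _ h
    exact (Prod.mk.injEq _ _ _ _ ▸ h).1
  · intro p hp
    simp only [Set.mem_setOf_eq] at hp
    unfold kNet at hp
    obtain ⟨h1, h2⟩ := Prod.mk.injEq _ _ _ _ ▸ hp
    refine ⟨p.1, ?_, ?_⟩
    · simp only [Set.mem_setOf_eq]
      funext i
      by_cases hi : i = Fin.last n
      · subst hi
        rw [hfn, ← congrFun h1 (Fin.last n), if_pos rfl]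
        congr 1
        simp only [eq_iff_iff]
        constructor
        · intro h j; rw [← congrFun h2 j, h j]; simp
        · intro h j
          have := congrFun h2 j
          rw [h j] at this
          simpa using this
      · rw [← congrFun h1 i, if_neg hi]
    · refine Prod.ext rfl ?_
      funext j
      exact congrFun h2 j
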